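/- Let N, K be positive natural numbers and let ψ : Matrix (Fin N) (Fin K) ℂ × Matrix (Fin N) (Fin K) ℂ × (Fin K → ℂ) → Matrix (Fin N) (Fin K) ℂ be ℂ-linear (in the triple of arguments jointly). If ψ(U * X, U * H, λ) = U * ψ(X, H, λ) for every unitary matrix U ∈ ℂ^{N×N}, every X, H ∈ ℂ^{N×K} and every λ : Fin K → ℂ, then there exist matrices G₁, G₂ ∈ ℂ^{K×K} such that ψ(X, H, λ) = X * G₁ + H * G₂ for all X, H, λ; in particular ψ does not depend on λ. -/

import Mathlib

open Matrix

theorem auxPermU (N : ℕ) (σ : Equiv.Perm (Fin N)) :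
    (σ.permMatrix ℂ)ᴴ * σ.permMatrix ℂ = 1 := by
  have h : (σ.permMatrix ℂ)ᴴ = Equiv.Perm.permMatrix ℂ σ.symm := by
    ext i j
    simp only [conjTranspose_apply, PEquiv.toMatrix_apply, Equiv.toPEquiv_apply, Option.mem_def,
      Option.some.injEq, apply_ite (star : ℂ → ℂ), star_one, star_zero]
    congr 1
    simp [eq_comm, Equiv.eq_symm_apply]
  rw [h, PEquiv.toMatrix_toPEquiv_mul]
  ext i j
  simp only [submatrix_apply, PEquiv.toMatrix_apply, Equiv.toPEquiv_apply, Option.mem_def,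
    Option.some.injEq, id, one_apply, Equiv.apply_symm_apply]

theorem auxDiagU (N : ℕ) (d : Fin N → ℂ) (hd : ∀ i, d i = 1 ∨ d i = -1) :
    (diagonal d)ᴴ * diagonal d = 1 := by
  rw [diagonal_conjTranspose, diagonal_mul_diagonal]
  have : (fun i => star (d i) * d i) = fun _ => (1:ℂ) := by
    funext i
    rcases hd i with h | h <;> simp [h]
  rw [show (diagonal fun i => star d i * d i) = diagonal fun i => star (d i) * d i from rfl,
    this, diagonal_one]

theorem auxEdec (N : ℕ) (i z : Fin N) :
    Matrix.single z i (1:ℂ) = (2⁻¹ : ℂ) • ((Equiv.swap i z).permMatrix ℂ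
      + diagonal (fun j => if j = z then (1:ℂ) else -1) * (Equiv.swap i z).permMatrix ℂ) := by
  ext a b
  simp only [Matrix.smul_apply, Matrix.add_apply, diagonal_mul, PEquiv.toMatrix_apply, Equiv.toPEquiv_apply,
    Option.mem_def, Option.some.injEq, smul_eq_mul, Matrix.single, of_apply]
  rcases eq_or_ne a z with ha | ha
  · subst ha
    rw [Equiv.swap_apply_right, if_pos rfl]
    rcases eq_or_ne i b with hb | hb <;> simp [hb] <;> norm_num
  · rw [if_neg ha, if_neg (fun h => ha h.1.symm)]
    generalize (if (Equiv.swap i z) a = b then (1:ℂ) else 0) = c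
    ring

/-- A `ℂ`-linear layer `ψ(X, H, λ)` that is unitarily equivariant in the antenna dimension
must have the form `ψ(X, H, λ) = X * G₁ + H * G₂`; in particular it cannot depend on the
user weights `λ`. -/
theorem linear_unitary_equivariant_layer_ignores_weights
    (N K : ℕ) (hN : 0 < N) (hK : 0 < K)
    (ψ : (Matrix (Fin N) (Fin K) ℂ × Matrix (Fin N) (Fin K) ℂ × (Fin K → ℂ))
          →ₗ[ℂ] Matrix (Fin N) (Fin K) ℂ)
    (heq : ∀ (U : Matrix (Fin N) (Fin N) ℂ) (X H : Matrix (Fin N) (Fin K) ℂ)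
        (lam : Fin K → ℂ), Uᴴ * U = 1 →
        ψ (U * X, U * H, lam) = U * ψ (X, H, lam)) :
    ∃ G₁ G₂ : Matrix (Fin K) (Fin K) ℂ,
      ∀ (X H : Matrix (Fin N) (Fin K) ℂ) (lam : Fin K → ℂ),
        ψ (X, H, lam) = X * G₁ + H * G₂ := by
  classical
  set z : Fin N := ⟨0, hN⟩ with hz
  -- Step 1: ψ (0, 0, lam) = 0
  have hlam : ∀ lam : Fin K → ℂ, ψ (0, 0, lam) = 0 := by
    intro lam
    have hu : ((-1 : Matrix (Fin N) (Fin N) ℂ))ᴴ * (-1) = 1 := by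
      simp
    have h := heq (-1) 0 0 lam hu
    rw [Matrix.mul_zero, Matrix.neg_mul, Matrix.one_mul] at h
    have h2 : (2:ℂ) • ψ (0, 0, lam) = 0 := by
      rw [two_smul]
      exact eq_neg_iff_add_eq_zero.mp h
    rcases smul_eq_zero.mp h2 with h3 | h3
    · exact absurd h3 (by norm_num)
    · exact h3
  -- Step 2: equivariance for stdBasisMatrix z i 1
  have hE : ∀ (i : Fin N) (X H : Matrix (Fin N) (Fin K) ℂ),
      ψ (Matrix.single z i (1:ℂ) * X, Matrix.single z i (1:ℂ) * H, 0)
        = Matrix.single z i (1:ℂ) * ψ (X, H, 0) := by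
    intro i X H
    set P : Matrix (Fin N) (Fin N) ℂ := (Equiv.swap i z).permMatrix ℂ with hPdef
    set D : Matrix (Fin N) (Fin N) ℂ := diagonal (fun j => if j = z then (1:ℂ) else -1)
      with hDdef
    have hP : Pᴴ * P = 1 := auxPermU N _
    have hDP : (D * P)ᴴ * (D * P) = 1 := by
      rw [conjTranspose_mul, mul_assoc, ← mul_assoc Dᴴ,
        auxDiagU N _ (fun j => by by_cases h : j = z <;> simp [h]), Matrix.one_mul, hP]
    have hEdec : Matrix.single z i (1:ℂ) = (2⁻¹ : ℂ) • (P + D * P) := auxEdec N i z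
    have htup : ∀ (A B C E' : Matrix (Fin N) (Fin K) ℂ),
        (((2⁻¹ : ℂ) • (A + B), (2⁻¹ : ℂ) • (C + E'), (0 : Fin K → ℂ))
          : Matrix (Fin N) (Fin K) ℂ × Matrix (Fin N) (Fin K) ℂ × (Fin K → ℂ))
        = (2⁻¹ : ℂ) • ((A, C, 0) + (B, E', 0)) := by
      intro A B C E'
      simp [Prod.ext_iff, smul_add]
    calc ψ (Matrix.single z i (1:ℂ) * X, Matrix.single z i (1:ℂ) * H, 0)
        = ψ ((2⁻¹ : ℂ) • (P * X + (D * P) * X), (2⁻¹ : ℂ) • (P * H + (D * P) * H), 0) := by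
          rw [hEdec, Matrix.smul_mul, Matrix.smul_mul, Matrix.add_mul, Matrix.add_mul]
      _ = (2⁻¹ : ℂ) • (ψ (P * X, P * H, 0) + ψ ((D * P) * X, (D * P) * H, 0)) := by
          rw [htup, _root_.map_smul, _root_.map_add]
      _ = (2⁻¹ : ℂ) • (P * ψ (X, H, 0) + (D * P) * ψ (X, H, 0)) := by
          rw [heq P X H 0 hP, heq (D * P) X H 0 hDP]
      _ = Matrix.single z i (1:ℂ) * ψ (X, H, 0) := by
          rw [hEdec, Matrix.smul_mul, Matrix.add_mul]
  -- basis matrices and G's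
  set B : Fin K → Matrix (Fin N) (Fin K) ℂ := fun j => Matrix.single z j (1:ℂ) with hB
  refine ⟨Matrix.of fun j k => ψ (B j, 0, 0) z k, Matrix.of fun j k => ψ (0, B j, 0) z k,
    fun X H lam => ?_⟩
  -- reduce to lam = 0
  have hsplit : ψ (X, H, lam) = ψ (X, H, 0) := by
    have h0 : ((X, H, lam) : Matrix (Fin N) (Fin K) ℂ × Matrix (Fin N) (Fin K) ℂ × (Fin K → ℂ))
        = (X, H, 0) + (0, 0, lam) := by
      simp [Prod.ext_iff]
    rw [h0, _root_.map_add, hlam, add_zero]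
  rw [hsplit]
  -- multiplication by stdBasisMatrix
  have hmul : ∀ (i : Fin N) (M : Matrix (Fin N) (Fin K) ℂ) (a : Fin N) (b : Fin K),
      (Matrix.single z i (1:ℂ) * M) a b = if a = z then M i b else 0 := by
    intro i M a b
    rcases eq_or_ne a z with ha | ha
    · subst ha
      simp [mul_apply, Matrix.single, ite_and]
    · simp [mul_apply, Matrix.single, ite_and, ha, Ne.symm ha]
  have hsum : ∀ (i : Fin N) (M : Matrix (Fin N) (Fin K) ℂ),
      Matrix.single z i (1:ℂ) * M = ∑ j, M i j • B j := by
    intro i M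
    ext a b
    rw [hmul, Matrix.sum_apply]
    simp only [Matrix.smul_apply, Pi.smul_apply, hB, Matrix.single, of_apply, smul_eq_mul]
    rcases eq_or_ne a z with ha | ha
    · subst ha
      simp [ite_and]
    · simp [ite_and, ha, Ne.symm ha]
  ext i k
  have key := congrArg (fun M => M z k) (hE i X H)
  beta_reduce at key
  rw [hmul] at key
  rw [if_pos rfl] at key
  rw [hsum i X, hsum i H] at key
  have htup2 : ((∑ j, X i j • B j, ∑ j, H i j • B j, (0 : Fin K → ℂ))
        : Matrix (Fin N) (Fin K) ℂ × Matrix (Fin N) (Fin K) ℂ × (Fin K → ℂ))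
      = ∑ j, X i j • ((B j, 0, 0)
          : Matrix (Fin N) (Fin K) ℂ × Matrix (Fin N) (Fin K) ℂ × (Fin K → ℂ))
        + ∑ j, H i j • ((0, B j, 0)
          : Matrix (Fin N) (Fin K) ℂ × Matrix (Fin N) (Fin K) ℂ × (Fin K → ℂ)) := by
    simp [Prod.ext_iff, Prod.fst_sum, Prod.snd_sum]
  rw [htup2, _root_.map_add, map_sum, map_sum] at key
  simp only [_root_.map_smul] at key
  rw [← key]
  simp [mul_apply, Matrix.add_apply, Matrix.sum_apply, Finset.sum_apply, Matrix.smul_apply, Pi.smul_apply,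
    smul_eq_mul, of_apply]
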